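/- arXiv:1404.6037 — 2 statements merged into one kernel-verified Lean document; each statement's English description precedes it below -/
import Mathlib

section
/- The multiplicative unit is depth-preserving invertible in LBIZ: if Γ(Γ₁, ⊤*) ⊢ H is derivable in LBIZ with derivation depth at most k, then Γ(Γ₁) ⊢ H is derivable in LBIZ with derivation depth at most k. -/
/-- BI formulas: propositional variables, ⊤, ⊥, ⊤*, ∧, ∨, ⊃, *, −∗. -/
inductive BI : Type
  | var : Nat → BI
  | top : BI
  | bot : BI
  | mtop : BI
  | conj : BI → BI → BI
  | disj : BI → BI → BI
  | imp : BI → BI → BI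
  | star : BI → BI → BI
  | wand : BI → BI → BI

/-- Bunches (BI structures): Γ := F | Γ; Γ | Γ, Γ. -/
inductive Bunch : Type
  | fm : BI → Bunch
  | semi : Bunch → Bunch → Bunch   -- additive ';'
  | comma : Bunch → Bunch → Bunch  -- multiplicative ','

/-- Structural congruence: full associativity and commutativity of ';' and ','. -/
inductive BunchEq : Bunch → Bunch → Prop
  | refl (Γ : Bunch) : BunchEq Γ Γ
  | symm {a b} : BunchEq a b → BunchEq b a
  | trans {a b c} : BunchEq a b → BunchEq b c → BunchEq a c
  | semiComm (a b : Bunch) : BunchEq (.semi a b) (.semi b a)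
  | semiAssoc (a b c : Bunch) : BunchEq (.semi (.semi a b) c) (.semi a (.semi b c))
  | commaComm (a b : Bunch) : BunchEq (.comma a b) (.comma b a)
  | commaAssoc (a b c : Bunch) : BunchEq (.comma (.comma a b) c) (.comma a (.comma b c))
  | semiCongr {a a' b b'} : BunchEq a a' → BunchEq b b' → BunchEq (.semi a b) (.semi a' b')
  | commaCongr {a a' b b'} : BunchEq a a' → BunchEq b b' → BunchEq (.comma a b) (.comma a' b')

/-- Bunched contexts with a single hole. -/
inductive Ctx : Type
  | hole : Ctx
  | semiL : Ctx → Bunch → Ctx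
  | semiR : Bunch → Ctx → Ctx
  | commaL : Ctx → Bunch → Ctx
  | commaR : Bunch → Ctx → Ctx

/-- Filling the hole of a context with a bunch. -/
def Ctx.fill : Ctx → Bunch → Bunch
  | .hole, Δ => Δ
  | .semiL C Γ, Δ => .semi (C.fill Δ) Γ
  | .semiR Γ C, Δ => .semi Γ (C.fill Δ)
  | .commaL C Γ, Δ => .comma (C.fill Δ) Γ
  | .commaR Γ C, Δ => .comma Γ (C.fill Δ)

/-- `osemi Γ̃ Δ` is `Γ̃; Δ`, where `Γ̃` may be empty. -/
def osemi : Option Bunch → Bunch → Bunch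
  | none, b => b
  | some a, b => .semi a b

/-- `ocomma Γ̃ Δ` is `Γ̃, Δ`, where `Γ̃` may be empty. -/
def ocomma : Option Bunch → Bunch → Bunch
  | none, b => b
  | some a, b => .comma a b

/-- The weakening preorder ⪯ on bunches: smallest reflexive (up to structural
congruence) and transitive relation with Γ(Δ) ⪯ Γ(Δ; Γ'). -/
inductive Wle : Bunch → Bunch → Prop
  | ofEq {a b} : BunchEq a b → Wle a b
  | weak (C : Ctx) (Δ Γ' : Bunch) : Wle (C.fill Δ) (C.fill (.semi Δ Γ'))
  | trans {a b c} : Wle a b → Wle b c → Wle a c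

/-- `(⊤*; Γ̃)` where `Γ̃` is possibly empty. -/
def mte : Option Bunch → Bunch
  | none => .fm .mtop
  | some Δ => .semi (.fm .mtop) Δ

/-- `Essence Γ₁ Γ₂` : Γ₂ is an essence of Γ₁. -/
inductive Essence : Bunch → Bunch → Prop
  | ofEq {a b} : BunchEq a b → Essence a b
  | insert {a} (C : Ctx) (Γ' : Bunch) (Δ : Option Bunch) :
      Essence a (C.fill Γ') → Essence a (C.fill (.comma Γ' (mte Δ)))
  | insertSemi {a} (C : Ctx) (Γ' Γ'' : Bunch) (Δ : Option Bunch) :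
      Essence a (C.fill (.semi Γ' Γ'')) →
      Essence a (C.fill (.semi (.comma Γ' (mte Δ)) Γ''))
  | congr {a b c} : Essence a b → BunchEq b c → Essence a c

/-- `Candidate Γ R₁ R₂` : (R₁, R₂) is a candidate of Γ. -/
def Candidate (Γ R₁ R₂ : Bunch) : Prop :=
  (R₂ = .fm .mtop ∧ Wle R₁ Γ) ∨ Wle (.comma R₁ R₂) Γ

/-- The representing preorder ⪯̂. -/
inductive RWle : Bunch → Bunch → Prop
  | ofEq {a b} : BunchEq a b → RWle a b
  | weak (a b : Bunch) : RWle a (.semi a b)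
  | weakComma (a b c : Bunch) : RWle (.comma a b) (.comma a (.semi b c))
  | trans {a b c} : RWle a b → RWle b c → RWle a c

/-- `RepCandidate Γ R₁ R₂` : (R₁, R₂) is a representing candidate of Γ. -/
def RepCandidate (Γ R₁ R₂ : Bunch) : Prop :=
  (R₂ = .fm .mtop ∧ RWle R₁ Γ) ∨ RWle (.comma R₁ R₂) Γ

/-- The LBIZ sequent calculus (parametrised by the candidate relation used in
*R and −∗L, and by whether the Cut rule is available), with derivation depth.
There are no structural rules; bunches are identified up to
associativity/commutativity via the depth-neutral `equiv` rule. -/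
inductive LBIZ (Cand : Bunch → Bunch → Bunch → Prop) (cut : Bool) :
    Bunch → BI → Nat → Prop
  | id (Γt : Option Bunch) (p : Nat) {Δ : Bunch} :
      Essence (osemi Γt (.fm (.var p))) Δ → LBIZ Cand cut Δ (.var p) 1
  | botL (C : Ctx) (H : BI) : LBIZ Cand cut (C.fill (.fm .bot)) H 1
  | topR (Γ : Bunch) : LBIZ Cand cut Γ .top 1
  | mtopR (Γt : Option Bunch) {Δ : Bunch} :
      Essence (osemi Γt (.fm .mtop)) Δ → LBIZ Cand cut Δ .mtop 1
  | conjL {C : Ctx} {F G H n} :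
      LBIZ Cand cut (C.fill (.semi (.fm F) (.fm G))) H n →
      LBIZ Cand cut (C.fill (.fm (.conj F G))) H (n + 1)
  | conjR {Γ F G n m} :
      LBIZ Cand cut Γ F n → LBIZ Cand cut Γ G m →
      LBIZ Cand cut Γ (.conj F G) (max n m + 1)
  | disjL {C : Ctx} {F G H n m} :
      LBIZ Cand cut (C.fill (.fm F)) H n → LBIZ Cand cut (C.fill (.fm G)) H m →
      LBIZ Cand cut (C.fill (.fm (.disj F G))) H (max n m + 1)
  | disjR₁ {Γ F G n} : LBIZ Cand cut Γ F n → LBIZ Cand cut Γ (.disj F G) (n + 1)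
  | disjR₂ {Γ F G n} : LBIZ Cand cut Γ G n → LBIZ Cand cut Γ (.disj F G) (n + 1)
  | impL (Γt : Option Bunch) {F G : BI} {Δ : Bunch} {C : Ctx} {H n m} :
      Essence (osemi Γt (.fm (.imp F G))) Δ →
      LBIZ Cand cut Δ F n →
      LBIZ Cand cut (C.fill (.semi (.fm G) Δ)) H m →
      LBIZ Cand cut (C.fill Δ) H (max n m + 1)
  | impR {Γ F G n} :
      LBIZ Cand cut (.semi Γ (.fm F)) G n → LBIZ Cand cut Γ (.imp F G) (n + 1)
  | starL {C : Ctx} {F G H n} :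
      LBIZ Cand cut (C.fill (.comma (.fm F) (.fm G))) H n →
      LBIZ Cand cut (C.fill (.fm (.star F G))) H (n + 1)
  | starR {Γ' R₁ R₂ : Bunch} {F G n m} :
      (Cand Γ' R₁ R₂ ∨ Cand Γ' R₂ R₁) →
      LBIZ Cand cut R₁ F n → LBIZ Cand cut R₂ G m →
      LBIZ Cand cut Γ' (.star F G) (max n m + 1)
  | wandL (Γ'o Rej : Option Bunch) (Rei : Bunch) (Γt : Option Bunch)
      {F G : BI} {Δ : Bunch} {C : Ctx} {H n m} :
      Essence (osemi Γt (.fm (.wand F G))) Δ →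
      ((Γ'o = none ∧ Rei = .fm .mtop ∧ Rej = none) ∨
        (∃ Γ' Rj, Γ'o = some Γ' ∧ Rej = some Rj ∧
          (Cand Γ' Rei Rj ∨ Cand Γ' Rj Rei))) →
      LBIZ Cand cut Rei F n →
      LBIZ Cand cut (C.fill (.semi (ocomma Rej (.fm G)) (ocomma Γ'o Δ))) H m →
      LBIZ Cand cut (C.fill (ocomma Γ'o Δ)) H (max n m + 1)
  | wandR {Γ F G n} :
      LBIZ Cand cut (.comma Γ (.fm F)) G n → LBIZ Cand cut Γ (.wand F G) (n + 1)
  | equiv {Γ Γ' H n} : BunchEq Γ Γ' → LBIZ Cand cut Γ H n → LBIZ Cand cut Γ' H n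
  | cutRule {Γ₁ : Bunch} {F : BI} {C : Ctx} {G n m} :
      cut = true →
      LBIZ Cand cut Γ₁ F n → LBIZ Cand cut (C.fill (.fm F)) G m →
      LBIZ Cand cut (C.fill Γ₁) G (max n m + 1)

/-- LBIZ proper: candidate relation `Candidate`, no Cut. -/
abbrev LBIZc : Bunch → BI → Nat → Prop := LBIZ Candidate false

/-- The LBI sequent calculus (without Cut), parametrised by whether contraction
is available for arbitrary bunches (`full = true`) or only for single formulas. -/
inductive LBIg (full : Bool) : Bunch → BI → Prop
  | id (F : BI) : LBIg full (.fm F) F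
  | botL (C : Ctx) (H : BI) : LBIg full (C.fill (.fm .bot)) H
  | topR (Γ : Bunch) : LBIg full Γ .top
  | mtopR : LBIg full (.fm .mtop) .mtop
  | conjL {C : Ctx} {F G H} :
      LBIg full (C.fill (.semi (.fm F) (.fm G))) H →
      LBIg full (C.fill (.fm (.conj F G))) H
  | conjR {Γ F G} : LBIg full Γ F → LBIg full Γ G → LBIg full Γ (.conj F G)
  | disjL {C : Ctx} {F G H} :
      LBIg full (C.fill (.fm F)) H → LBIg full (C.fill (.fm G)) H →
      LBIg full (C.fill (.fm (.disj F G))) H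
  | disjR₁ {Γ F G} : LBIg full Γ F → LBIg full Γ (.disj F G)
  | disjR₂ {Γ F G} : LBIg full Γ G → LBIg full Γ (.disj F G)
  | impL {Γ₁ : Bunch} {C : Ctx} {F G H} :
      LBIg full Γ₁ F → LBIg full (C.fill (.semi Γ₁ (.fm G))) H →
      LBIg full (C.fill (.semi Γ₁ (.fm (.imp F G)))) H
  | impR {Γ F G} : LBIg full (.semi Γ (.fm F)) G → LBIg full Γ (.imp F G)
  | starL {C : Ctx} {F G H} :
      LBIg full (C.fill (.comma (.fm F) (.fm G))) H →
      LBIg full (C.fill (.fm (.star F G))) H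
  | starR {Γ₁ Γ₂ F G} :
      LBIg full Γ₁ F → LBIg full Γ₂ G → LBIg full (.comma Γ₁ Γ₂) (.star F G)
  | wandL {Γ₁ : Bunch} {C : Ctx} {F G H} :
      LBIg full Γ₁ F → LBIg full (C.fill (.fm G)) H →
      LBIg full (C.fill (.comma Γ₁ (.fm (.wand F G)))) H
  | wandR {Γ F G} : LBIg full (.comma Γ (.fm F)) G → LBIg full Γ (.wand F G)
  | wk {C : Ctx} {Γ₁ Γ₂ H} :
      LBIg full (C.fill Γ₁) H → LBIg full (C.fill (.semi Γ₁ Γ₂)) H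
  | ctr {C : Ctx} {Γ₁ H} :
      (full = true ∨ ∃ A, Γ₁ = .fm A) →
      LBIg full (C.fill (.semi Γ₁ Γ₁)) H → LBIg full (C.fill Γ₁) H
  | eqAnt1a {C : Ctx} {Γ₁ H} :
      LBIg full (C.fill (.semi Γ₁ (.fm .top))) H → LBIg full (C.fill Γ₁) H
  | eqAnt1b {C : Ctx} {Γ₁ H} :
      LBIg full (C.fill Γ₁) H → LBIg full (C.fill (.semi Γ₁ (.fm .top))) H
  | eqAnt2a {C : Ctx} {Γ₁ H} :
      LBIg full (C.fill (.comma Γ₁ (.fm .mtop))) H → LBIg full (C.fill Γ₁) H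
  | eqAnt2b {C : Ctx} {Γ₁ H} :
      LBIg full (C.fill Γ₁) H → LBIg full (C.fill (.comma Γ₁ (.fm .mtop))) H
  | equiv {Γ Γ' H} : BunchEq Γ Γ' → LBIg full Γ H → LBIg full Γ' H

/-- LBI with unrestricted (structural) contraction. -/
abbrev LBI : Bunch → BI → Prop := LBIg true

/-- One application of the LBI weakening rule Wk L on a sequent
(also allowing structural-congruence adjustments). -/
inductive WkStep : Bunch × BI → Bunch × BI → Prop
  | step (C : Ctx) (Δ Γ' : Bunch) (H : BI) :
      WkStep (C.fill Δ, H) (C.fill (.semi Δ Γ'), H)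
  | equiv {Γ₁ Γ₂ : Bunch} (H : BI) : BunchEq Γ₁ Γ₂ → WkStep (Γ₁, H) (Γ₂, H)

/-- One application of Wk L or of either direction of EqAnt₂ on a sequent. -/
inductive WkEq2Step : Bunch × BI → Bunch × BI → Prop
  | wk (C : Ctx) (Δ Γ' : Bunch) (H : BI) :
      WkEq2Step (C.fill Δ, H) (C.fill (.semi Δ Γ'), H)
  | eq2a (C : Ctx) (Γ₁ : Bunch) (H : BI) :
      WkEq2Step (C.fill (.comma Γ₁ (.fm .mtop)), H) (C.fill Γ₁, H)
  | eq2b (C : Ctx) (Γ₁ : Bunch) (H : BI) :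
      WkEq2Step (C.fill Γ₁, H) (C.fill (.comma Γ₁ (.fm .mtop)), H)
  | equiv {Γ₁ Γ₂ : Bunch} (H : BI) : BunchEq Γ₁ Γ₂ → WkEq2Step (Γ₁, H) (Γ₂, H)

/-- The preorder generated by weakening together with insertion of
multiplicative-unit components. -/
inductive WleM : Bunch → Bunch → Prop
  | ofEq {a b} : BunchEq a b → WleM a b
  | weak (C : Ctx) (Δ Γ' : Bunch) : WleM (C.fill Δ) (C.fill (.semi Δ Γ'))
  | munit (C : Ctx) (Δ : Bunch) : WleM (C.fill Δ) (C.fill (.comma Δ (.fm .mtop)))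
  | trans {a b c} : WleM a b → WleM b c → WleM a c

/- ===== Auxiliary development for Statement 9 ===== -/

/-- Composition of contexts. -/
def Ctx.comp : Ctx → Ctx → Ctx
  | .hole, D => D
  | .semiL C Γ, D => .semiL (C.comp D) Γ
  | .semiR Γ C, D => .semiR Γ (C.comp D)
  | .commaL C Γ, D => .commaL (C.comp D) Γ
  | .commaR Γ C, D => .commaR Γ (C.comp D)

theorem Ctx.fill_comp (C D : Ctx) (X : Bunch) :
    (C.comp D).fill X = C.fill (D.fill X) := by
  induction C <;> simp [Ctx.comp, Ctx.fill, *]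

theorem Ctx.fill_fm {C : Ctx} {X : Bunch} {Z : BI} (h : C.fill X = .fm Z) :
    C = .hole ∧ X = .fm Z := by
  cases C <;> simp [Ctx.fill] at h ⊢ <;> exact h

/-- Removal of one multiplicative-unit comma component. -/
inductive Rem : Bunch → Bunch → Prop
  | hereL (b) : Rem (.comma (.fm .mtop) b) b
  | hereR (a) : Rem (.comma a (.fm .mtop)) a
  | commaL {a a'} (b) : Rem a a' → Rem (.comma a b) (.comma a' b)
  | commaR (a) {b b'} : Rem b b' → Rem (.comma a b) (.comma a b')
  | semiL {a a'} (b) : Rem a a' → Rem (.semi a b) (.semi a' b)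
  | semiR (a) {b b'} : Rem b b' → Rem (.semi a b) (.semi a b')

/-- Replace one ⊤* leaf by (⊤* ; Δ). -/
inductive WkMT : Bunch → Bunch → Prop
  | here (Δ) : WkMT (.fm .mtop) (.semi (.fm .mtop) Δ)
  | commaL {a a'} (b) : WkMT a a' → WkMT (.comma a b) (.comma a' b)
  | commaR (a) {b b'} : WkMT b b' → WkMT (.comma a b) (.comma a b')
  | semiL {a a'} (b) : WkMT a a' → WkMT (.semi a b) (.semi a' b)
  | semiR (a) {b b'} : WkMT b b' → WkMT (.semi a b) (.semi a b')

theorem rem_fill (C : Ctx) {s t : Bunch} (h : Rem s t) :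
    Rem (C.fill s) (C.fill t) := by
  induction C with
  | hole => exact h
  | semiL C Γ ih => exact .semiL Γ ih
  | semiR Γ C ih => exact .semiR Γ ih
  | commaL C Γ ih => exact .commaL Γ ih
  | commaR Γ C ih => exact .commaR Γ ih

theorem wkmt_fill (C : Ctx) {s t : Bunch} (h : WkMT s t) :
    WkMT (C.fill s) (C.fill t) := by
  induction C with
  | hole => exact h
  | semiL C Γ ih => exact .semiL Γ ih
  | semiR Γ C ih => exact .semiR Γ ih
  | commaL C Γ ih => exact .commaL Γ ih
  | commaR Γ C ih => exact .commaR Γ ih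

theorem bunchEq_fill (C : Ctx) {s t : Bunch} (h : BunchEq s t) :
    BunchEq (C.fill s) (C.fill t) := by
  induction C with
  | hole => exact h
  | semiL C Γ ih => exact .semiCongr ih (.refl _)
  | semiR Γ C ih => exact .semiCongr (.refl _) ih
  | commaL C Γ ih => exact .commaCongr ih (.refl _)
  | commaR Γ C ih => exact .commaCongr (.refl _) ih

theorem bunchEq_fm {x y : Bunch} (h : BunchEq x y) :
    ∀ Z : BI, (x = .fm Z ↔ y = .fm Z) := by
  induction h with
  | refl => simp
  | symm _ ih => exact fun Z => (ih Z).symm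
  | trans _ _ ih1 ih2 => exact fun Z => (ih1 Z).trans (ih2 Z)
  | semiComm a b => exact fun Z => ⟨fun h => by simp at h, fun h => by simp at h⟩
  | semiAssoc a b c => exact fun Z => ⟨fun h => by simp at h, fun h => by simp at h⟩
  | commaComm a b => exact fun Z => ⟨fun h => by simp at h, fun h => by simp at h⟩
  | commaAssoc a b c => exact fun Z => ⟨fun h => by simp at h, fun h => by simp at h⟩
  | semiCongr _ _ _ _ => exact fun Z => ⟨fun h => by simp at h, fun h => by simp at h⟩
  | commaCongr _ _ _ _ => exact fun Z => ⟨fun h => by simp at h, fun h => by simp at h⟩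
/-- Structural congruence commutes with removal, in both directions. -/
theorem bunchEq_rem {a b : Bunch} (h : BunchEq a b) :
    (∀ b', Rem b b' → ∃ a', Rem a a' ∧ BunchEq a' b') ∧
    (∀ a', Rem a a' → ∃ b', Rem b b' ∧ BunchEq b' a') := by
  induction h with
  | refl a => exact ⟨fun b' h => ⟨b', h, .refl b'⟩, fun a' h => ⟨a', h, .refl a'⟩⟩
  | symm _ ih => exact ⟨ih.2, ih.1⟩
  | trans _ _ ih1 ih2 =>
    constructor
    · intro c' h
      obtain ⟨b', hb, eb⟩ := ih2.1 c' h
      obtain ⟨a', ha, ea⟩ := ih1.1 b' hb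
      exact ⟨a', ha, ea.trans eb⟩
    · intro a' h
      obtain ⟨b', hb, eb⟩ := ih1.2 a' h
      obtain ⟨c', hcc, ec⟩ := ih2.2 b' hb
      exact ⟨c', hcc, ec.trans eb⟩
  | semiComm a b =>
    constructor
    · intro x h
      cases h with
      | semiL _ h => exact ⟨_, .semiR _ h, .semiComm _ _⟩
      | semiR _ h => exact ⟨_, .semiL _ h, .semiComm _ _⟩
    · intro x h
      cases h with
      | semiL _ h => exact ⟨_, .semiR _ h, .semiComm _ _⟩
      | semiR _ h => exact ⟨_, .semiL _ h, .semiComm _ _⟩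
  | semiAssoc a b c =>
    constructor
    · intro x h
      cases h with
      | semiL _ h => exact ⟨_, .semiL _ (.semiL _ h), .semiAssoc _ _ _⟩
      | semiR _ h =>
        cases h with
        | semiL _ h => exact ⟨_, .semiL _ (.semiR _ h), .semiAssoc _ _ _⟩
        | semiR _ h => exact ⟨_, .semiR _ h, .semiAssoc _ _ _⟩
    · intro x h
      cases h with
      | semiL _ h =>
        cases h with
        | semiL _ h => exact ⟨_, .semiL _ h, .symm (.semiAssoc _ _ _)⟩
        | semiR _ h => exact ⟨_, .semiR _ (.semiL _ h), .symm (.semiAssoc _ _ _)⟩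
      | semiR _ h => exact ⟨_, .semiR _ (.semiR _ h), .symm (.semiAssoc _ _ _)⟩
  | commaComm a b =>
    constructor
    · intro x h
      cases h with
      | hereL => exact ⟨_, .hereR _, .refl _⟩
      | hereR => exact ⟨_, .hereL _, .refl _⟩
      | commaL _ h => exact ⟨_, .commaR _ h, .commaComm _ _⟩
      | commaR _ h => exact ⟨_, .commaL _ h, .commaComm _ _⟩
    · intro x h
      cases h with
      | hereL => exact ⟨_, .hereR _, .refl _⟩
      | hereR => exact ⟨_, .hereL _, .refl _⟩
      | commaL _ h => exact ⟨_, .commaR _ h, .commaComm _ _⟩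
      | commaR _ h => exact ⟨_, .commaL _ h, .commaComm _ _⟩
  | commaAssoc a b c =>
    constructor
    · intro x h
      cases h with
      | hereL => exact ⟨_, .commaL _ (.hereL _), .refl _⟩
      | commaL _ h => exact ⟨_, .commaL _ (.commaL _ h), .commaAssoc _ _ _⟩
      | commaR _ h =>
        cases h with
        | hereL => exact ⟨_, .commaL _ (.hereR _), .refl _⟩
        | hereR => exact ⟨_, .hereR _, .refl _⟩
        | commaL _ h => exact ⟨_, .commaL _ (.commaR _ h), .commaAssoc _ _ _⟩
        | commaR _ h => exact ⟨_, .commaR _ h, .commaAssoc _ _ _⟩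
    · intro x h
      cases h with
      | hereR => exact ⟨_, .commaR _ (.hereR _), .refl _⟩
      | commaL _ h =>
        cases h with
        | hereL => exact ⟨_, .hereL _, .refl _⟩
        | hereR => exact ⟨_, .commaR _ (.hereL _), .refl _⟩
        | commaL _ h => exact ⟨_, .commaL _ h, .symm (.commaAssoc _ _ _)⟩
        | commaR _ h => exact ⟨_, .commaR _ (.commaL _ h), .symm (.commaAssoc _ _ _)⟩
      | commaR _ h => exact ⟨_, .commaR _ (.commaR _ h), .symm (.commaAssoc _ _ _)⟩
  | semiCongr h1 h2 ih1 ih2 =>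
    constructor
    · intro x h
      cases h with
      | semiL _ h =>
        obtain ⟨a₂, r, e⟩ := ih1.1 _ h
        exact ⟨_, .semiL _ r, .semiCongr e h2⟩
      | semiR _ h =>
        obtain ⟨b₂, r, e⟩ := ih2.1 _ h
        exact ⟨_, .semiR _ r, .semiCongr h1 e⟩
    · intro x h
      cases h with
      | semiL _ h =>
        obtain ⟨a₂, r, e⟩ := ih1.2 _ h
        exact ⟨_, .semiL _ r, .semiCongr e (.symm h2)⟩
      | semiR _ h =>
        obtain ⟨b₂, r, e⟩ := ih2.2 _ h
        exact ⟨_, .semiR _ r, .semiCongr (.symm h1) e⟩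
  | commaCongr h1 h2 ih1 ih2 =>
    constructor
    · intro x h
      cases h with
      | hereL =>
        have ha : _ = Bunch.fm BI.mtop := (bunchEq_fm h1 BI.mtop).mpr rfl
        subst ha
        exact ⟨_, .hereL _, h2⟩
      | hereR =>
        have hb : _ = Bunch.fm BI.mtop := (bunchEq_fm h2 BI.mtop).mpr rfl
        subst hb
        exact ⟨_, .hereR _, h1⟩
      | commaL _ h =>
        obtain ⟨a₂, r, e⟩ := ih1.1 _ h
        exact ⟨_, .commaL _ r, .commaCongr e h2⟩
      | commaR _ h =>
        obtain ⟨b₂, r, e⟩ := ih2.1 _ h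
        exact ⟨_, .commaR _ r, .commaCongr h1 e⟩
    · intro x h
      cases h with
      | hereL =>
        have ha : _ = Bunch.fm BI.mtop := (bunchEq_fm h1 BI.mtop).mp rfl
        subst ha
        exact ⟨_, .hereL _, .symm h2⟩
      | hereR =>
        have hb : _ = Bunch.fm BI.mtop := (bunchEq_fm h2 BI.mtop).mp rfl
        subst hb
        exact ⟨_, .hereR _, .symm h1⟩
      | commaL _ h =>
        obtain ⟨a₂, r, e⟩ := ih1.2 _ h
        exact ⟨_, .commaL _ r, .commaCongr e (.symm h2)⟩
      | commaR _ h =>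
        obtain ⟨b₂, r, e⟩ := ih2.2 _ h
        exact ⟨_, .commaR _ r, .commaCongr (.symm h1) e⟩

/-- Structural congruence commutes with ⊤*-weakening, in both directions. -/
theorem bunchEq_wkmt {a b : Bunch} (h : BunchEq a b) :
    (∀ b', WkMT b b' → ∃ a', WkMT a a' ∧ BunchEq a' b') ∧
    (∀ a', WkMT a a' → ∃ b', WkMT b b' ∧ BunchEq b' a') := by
  induction h with
  | refl a => exact ⟨fun b' h => ⟨b', h, .refl b'⟩, fun a' h => ⟨a', h, .refl a'⟩⟩
  | symm _ ih => exact ⟨ih.2, ih.1⟩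
  | trans _ _ ih1 ih2 =>
    constructor
    · intro c' h
      obtain ⟨b', hb, eb⟩ := ih2.1 c' h
      obtain ⟨a', ha, ea⟩ := ih1.1 b' hb
      exact ⟨a', ha, ea.trans eb⟩
    · intro a' h
      obtain ⟨b', hb, eb⟩ := ih1.2 a' h
      obtain ⟨c', hcc, ec⟩ := ih2.2 b' hb
      exact ⟨c', hcc, ec.trans eb⟩
  | semiComm a b =>
    constructor
    · intro x h
      cases h with
      | semiL _ h => exact ⟨_, .semiR _ h, .semiComm _ _⟩
      | semiR _ h => exact ⟨_, .semiL _ h, .semiComm _ _⟩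
    · intro x h
      cases h with
      | semiL _ h => exact ⟨_, .semiR _ h, .semiComm _ _⟩
      | semiR _ h => exact ⟨_, .semiL _ h, .semiComm _ _⟩
  | semiAssoc a b c =>
    constructor
    · intro x h
      cases h with
      | semiL _ h => exact ⟨_, .semiL _ (.semiL _ h), .semiAssoc _ _ _⟩
      | semiR _ h =>
        cases h with
        | semiL _ h => exact ⟨_, .semiL _ (.semiR _ h), .semiAssoc _ _ _⟩
        | semiR _ h => exact ⟨_, .semiR _ h, .semiAssoc _ _ _⟩
    · intro x h
      cases h with
      | semiL _ h =>
        cases h with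
        | semiL _ h => exact ⟨_, .semiL _ h, .symm (.semiAssoc _ _ _)⟩
        | semiR _ h => exact ⟨_, .semiR _ (.semiL _ h), .symm (.semiAssoc _ _ _)⟩
      | semiR _ h => exact ⟨_, .semiR _ (.semiR _ h), .symm (.semiAssoc _ _ _)⟩
  | commaComm a b =>
    constructor
    · intro x h
      cases h with
      | commaL _ h => exact ⟨_, .commaR _ h, .commaComm _ _⟩
      | commaR _ h => exact ⟨_, .commaL _ h, .commaComm _ _⟩
    · intro x h
      cases h with
      | commaL _ h => exact ⟨_, .commaR _ h, .commaComm _ _⟩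
      | commaR _ h => exact ⟨_, .commaL _ h, .commaComm _ _⟩
  | commaAssoc a b c =>
    constructor
    · intro x h
      cases h with
      | commaL _ h => exact ⟨_, .commaL _ (.commaL _ h), .commaAssoc _ _ _⟩
      | commaR _ h =>
        cases h with
        | commaL _ h => exact ⟨_, .commaL _ (.commaR _ h), .commaAssoc _ _ _⟩
        | commaR _ h => exact ⟨_, .commaR _ h, .commaAssoc _ _ _⟩
    · intro x h
      cases h with
      | commaL _ h =>
        cases h with
        | commaL _ h => exact ⟨_, .commaL _ h, .symm (.commaAssoc _ _ _)⟩
        | commaR _ h => exact ⟨_, .commaR _ (.commaL _ h), .symm (.commaAssoc _ _ _)⟩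
      | commaR _ h => exact ⟨_, .commaR _ (.commaR _ h), .symm (.commaAssoc _ _ _)⟩
  | semiCongr h1 h2 ih1 ih2 =>
    constructor
    · intro x h
      cases h with
      | semiL _ h =>
        obtain ⟨a₂, r, e⟩ := ih1.1 _ h
        exact ⟨_, .semiL _ r, .semiCongr e h2⟩
      | semiR _ h =>
        obtain ⟨b₂, r, e⟩ := ih2.1 _ h
        exact ⟨_, .semiR _ r, .semiCongr h1 e⟩
    · intro x h
      cases h with
      | semiL _ h =>
        obtain ⟨a₂, r, e⟩ := ih1.2 _ h
        exact ⟨_, .semiL _ r, .semiCongr e (.symm h2)⟩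
      | semiR _ h =>
        obtain ⟨b₂, r, e⟩ := ih2.2 _ h
        exact ⟨_, .semiR _ r, .semiCongr (.symm h1) e⟩
  | commaCongr h1 h2 ih1 ih2 =>
    constructor
    · intro x h
      cases h with
      | commaL _ h =>
        obtain ⟨a₂, r, e⟩ := ih1.1 _ h
        exact ⟨_, .commaL _ r, .commaCongr e h2⟩
      | commaR _ h =>
        obtain ⟨b₂, r, e⟩ := ih2.1 _ h
        exact ⟨_, .commaR _ r, .commaCongr h1 e⟩
    · intro x h
      cases h with
      | commaL _ h =>
        obtain ⟨a₂, r, e⟩ := ih1.2 _ h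
        exact ⟨_, .commaL _ r, .commaCongr e (.symm h2)⟩
      | commaR _ h =>
        obtain ⟨b₂, r, e⟩ := ih2.2 _ h
        exact ⟨_, .commaR _ r, .commaCongr (.symm h1) e⟩
theorem rem_fm_inv {F : BI} {x : Bunch} (h : Rem (.fm F) x) : False := by
  nomatch h

theorem rem_semi_inv {a b x : Bunch} (h : Rem (.semi a b) x) :
    (∃ a', Rem a a' ∧ x = .semi a' b) ∨ (∃ b', Rem b b' ∧ x = .semi a b') := by
  cases h with
  | semiL _ h => exact .inl ⟨_, h, rfl⟩
  | semiR _ h => exact .inr ⟨_, h, rfl⟩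

theorem rem_comma_inv {a b x : Bunch} (h : Rem (.comma a b) x) :
    (a = .fm .mtop ∧ x = b) ∨ (b = .fm .mtop ∧ x = a) ∨
    (∃ a', Rem a a' ∧ x = .comma a' b) ∨ (∃ b', Rem b b' ∧ x = .comma a b') := by
  cases h with
  | hereL => exact .inl ⟨rfl, rfl⟩
  | hereR => exact .inr (.inl ⟨rfl, rfl⟩)
  | commaL _ h => exact .inr (.inr (.inl ⟨_, h, rfl⟩))
  | commaR _ h => exact .inr (.inr (.inr ⟨_, h, rfl⟩))

theorem wkmt_fm_inv {F : BI} {x : Bunch} (h : WkMT (.fm F) x) :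
    F = .mtop ∧ ∃ Δ, x = .semi (.fm .mtop) Δ := by
  cases h with
  | here Δ => exact ⟨rfl, Δ, rfl⟩

theorem wkmt_semi_inv {a b x : Bunch} (h : WkMT (.semi a b) x) :
    (∃ a', WkMT a a' ∧ x = .semi a' b) ∨ (∃ b', WkMT b b' ∧ x = .semi a b') := by
  cases h with
  | semiL _ h => exact .inl ⟨_, h, rfl⟩
  | semiR _ h => exact .inr ⟨_, h, rfl⟩

theorem wkmt_comma_inv {a b x : Bunch} (h : WkMT (.comma a b) x) :
    (∃ a', WkMT a a' ∧ x = .comma a' b) ∨ (∃ b', WkMT b b' ∧ x = .comma a b') := by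
  cases h with
  | commaL _ h => exact .inl ⟨_, h, rfl⟩
  | commaR _ h => exact .inr ⟨_, h, rfl⟩

/-- Decomposition of a removal applied to a filled context. -/
theorem rem_fill_inv : ∀ (C : Ctx) {X b'}, Rem (C.fill X) b' →
    (∃ X' : Bunch, Rem X X' ∧ b' = C.fill X') ∨
    (∃ C' : Ctx, b' = C'.fill X ∧ ∀ Y, Rem (C.fill Y) (C'.fill Y)) ∨
    (X = .fm .mtop ∧ ∃ (C₀ : Ctx) (Γs : Bunch), b' = C₀.fill Γs ∧
      (C = C₀.comp (.commaL .hole Γs) ∨ C = C₀.comp (.commaR Γs .hole))) := by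
  intro C
  induction C with
  | hole => intro X b' h; exact .inl ⟨b', h, rfl⟩
  | semiL C₁ Γb ih =>
    intro X b' h
    rcases rem_semi_inv h with ⟨y, h1, rfl⟩ | ⟨y, h2, rfl⟩
    · rcases ih h1 with ⟨X', r, rfl⟩ | ⟨C', rfl, hall⟩ | ⟨hx, C₀, Γs, rfl, hc⟩
      · exact .inl ⟨X', r, rfl⟩
      · exact .inr (.inl ⟨.semiL C' Γb, rfl, fun Y => .semiL _ (hall Y)⟩)
      · refine .inr (.inr ⟨hx, .semiL C₀ Γb, Γs, rfl, ?_⟩)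
        rcases hc with rfl | rfl
        · exact .inl rfl
        · exact .inr rfl
    · exact .inr (.inl ⟨.semiL C₁ y, rfl, fun Y => .semiR _ h2⟩)
  | semiR Γa C₁ ih =>
    intro X b' h
    rcases rem_semi_inv h with ⟨y, h2, rfl⟩ | ⟨y, h1, rfl⟩
    · exact .inr (.inl ⟨.semiR y C₁, rfl, fun Y => .semiL _ h2⟩)
    · rcases ih h1 with ⟨X', r, rfl⟩ | ⟨C', rfl, hall⟩ | ⟨hx, C₀, Γs, rfl, hc⟩
      · exact .inl ⟨X', r, rfl⟩
      · exact .inr (.inl ⟨.semiR Γa C', rfl, fun Y => .semiR _ (hall Y)⟩)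
      · refine .inr (.inr ⟨hx, .semiR Γa C₀, Γs, rfl, ?_⟩)
        rcases hc with rfl | rfl
        · exact .inl rfl
        · exact .inr rfl
  | commaL C₁ Γb ih =>
    intro X b' h
    rcases rem_comma_inv h with ⟨hfm, rfl⟩ | ⟨hfm, rfl⟩ | ⟨y, h1, rfl⟩ | ⟨y, h2, rfl⟩
    · obtain ⟨rfl, rfl⟩ := Ctx.fill_fm hfm
      exact .inr (.inr ⟨rfl, .hole, _, rfl, .inl rfl⟩)
    · subst hfm
      exact .inr (.inl ⟨C₁, rfl, fun Y => .hereR _⟩)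
    · rcases ih h1 with ⟨X', r, rfl⟩ | ⟨C', rfl, hall⟩ | ⟨hx, C₀, Γs, rfl, hc⟩
      · exact .inl ⟨X', r, rfl⟩
      · exact .inr (.inl ⟨.commaL C' Γb, rfl, fun Y => .commaL _ (hall Y)⟩)
      · refine .inr (.inr ⟨hx, .commaL C₀ Γb, Γs, rfl, ?_⟩)
        rcases hc with rfl | rfl
        · exact .inl rfl
        · exact .inr rfl
    · exact .inr (.inl ⟨.commaL C₁ y, rfl, fun Y => .commaR _ h2⟩)
  | commaR Γa C₁ ih =>
    intro X b' h
    rcases rem_comma_inv h with ⟨hfm, rfl⟩ | ⟨hfm, rfl⟩ | ⟨y, h2, rfl⟩ | ⟨y, h1, rfl⟩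
    · subst hfm
      exact .inr (.inl ⟨C₁, rfl, fun Y => .hereL _⟩)
    · obtain ⟨rfl, rfl⟩ := Ctx.fill_fm hfm
      exact .inr (.inr ⟨rfl, .hole, _, rfl, .inr rfl⟩)
    · exact .inr (.inl ⟨.commaR y C₁, rfl, fun Y => .commaL _ h2⟩)
    · rcases ih h1 with ⟨X', r, rfl⟩ | ⟨C', rfl, hall⟩ | ⟨hx, C₀, Γs, rfl, hc⟩
      · exact .inl ⟨X', r, rfl⟩
      · exact .inr (.inl ⟨.commaR Γa C', rfl, fun Y => .commaR _ (hall Y)⟩)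
      · refine .inr (.inr ⟨hx, .commaR Γa C₀, Γs, rfl, ?_⟩)
        rcases hc with rfl | rfl
        · exact .inl rfl
        · exact .inr rfl

/-- Decomposition of a ⊤*-weakening applied to a filled context. -/
theorem wkmt_fill_inv : ∀ (C : Ctx) {X b'}, WkMT (C.fill X) b' →
    (∃ X' : Bunch, WkMT X X' ∧ b' = C.fill X') ∨
    (∃ C' : Ctx, b' = C'.fill X ∧ ∀ Y, WkMT (C.fill Y) (C'.fill Y)) := by
  intro C
  induction C with
  | hole => intro X b' h; exact .inl ⟨b', h, rfl⟩
  | semiL C₁ Γb ih =>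
    intro X b' h
    rcases wkmt_semi_inv h with ⟨y, h1, rfl⟩ | ⟨y, h2, rfl⟩
    · rcases ih h1 with ⟨X', r, rfl⟩ | ⟨C', rfl, hall⟩
      · exact .inl ⟨X', r, rfl⟩
      · exact .inr ⟨.semiL C' Γb, rfl, fun Y => .semiL _ (hall Y)⟩
    · exact .inr ⟨.semiL C₁ y, rfl, fun Y => .semiR _ h2⟩
  | semiR Γa C₁ ih =>
    intro X b' h
    rcases wkmt_semi_inv h with ⟨y, h2, rfl⟩ | ⟨y, h1, rfl⟩
    · exact .inr ⟨.semiR y C₁, rfl, fun Y => .semiL _ h2⟩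
    · rcases ih h1 with ⟨X', r, rfl⟩ | ⟨C', rfl, hall⟩
      · exact .inl ⟨X', r, rfl⟩
      · exact .inr ⟨.semiR Γa C', rfl, fun Y => .semiR _ (hall Y)⟩
  | commaL C₁ Γb ih =>
    intro X b' h
    rcases wkmt_comma_inv h with ⟨y, h1, rfl⟩ | ⟨y, h2, rfl⟩
    · rcases ih h1 with ⟨X', r, rfl⟩ | ⟨C', rfl, hall⟩
      · exact .inl ⟨X', r, rfl⟩
      · exact .inr ⟨.commaL C' Γb, rfl, fun Y => .commaL _ (hall Y)⟩
    · exact .inr ⟨.commaL C₁ y, rfl, fun Y => .commaR _ h2⟩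
  | commaR Γa C₁ ih =>
    intro X b' h
    rcases wkmt_comma_inv h with ⟨y, h2, rfl⟩ | ⟨y, h1, rfl⟩
    · exact .inr ⟨.commaR y C₁, rfl, fun Y => .commaL _ h2⟩
    · rcases ih h1 with ⟨X', r, rfl⟩ | ⟨C', rfl, hall⟩
      · exact .inl ⟨X', r, rfl⟩
      · exact .inr ⟨.commaR Γa C', rfl, fun Y => .commaR _ (hall Y)⟩
theorem Essence.preEq {a₀ a b : Bunch} (e : BunchEq a₀ a) (h : Essence a b) :
    Essence a₀ b := by
  induction h with
  | ofEq h => exact .ofEq (e.trans h)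
  | insert C Γ' Δ _ ih => exact .insert C Γ' Δ ih
  | insertSemi C Γ' Γ'' Δ _ ih => exact .insertSemi C Γ' Γ'' Δ ih
  | congr _ h ih => exact .congr ih h

theorem essence_fm {a b : Bunch} (h : Essence a b) :
    ∀ Z : BI, b = .fm Z → a = .fm Z := by
  induction h with
  | ofEq h => exact fun Z hz => (bunchEq_fm h Z).mpr hz
  | insert C Γ' Δo _ _ =>
    intro Z hz
    obtain ⟨rfl, h2⟩ := Ctx.fill_fm hz
    simp at h2
  | insertSemi C Γ' Γ'' Δo _ _ =>
    intro Z hz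
    obtain ⟨rfl, h2⟩ := Ctx.fill_fm hz
    simp at h2
  | congr _ he ih => exact fun Z hz => ih Z ((bunchEq_fm he Z).mpr hz)

theorem wle_fm {a b : Bunch} (h : Wle a b) : ∀ Z : BI, b = .fm Z → a = .fm Z := by
  induction h with
  | ofEq h => exact fun Z hz => (bunchEq_fm h Z).mpr hz
  | weak C Δ Γ' =>
    intro Z hz
    obtain ⟨rfl, h2⟩ := Ctx.fill_fm hz
    simp at h2
  | trans _ _ ih1 ih2 => exact fun Z hz => ih1 Z (ih2 Z hz)

/-- Essences are stable under ⊤*-weakening of a ⊤* leaf. -/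
theorem essence_wkmt {a b : Bunch} (h : Essence a b) :
    ∀ b', WkMT b b' → ∃ a', Essence a' b' ∧ (a' = a ∨ WkMT a a') := by
  induction h with
  | ofEq h =>
    intro b' hw
    obtain ⟨a', hw', he⟩ := (bunchEq_wkmt h).1 b' hw
    exact ⟨a', .ofEq he, .inr hw'⟩
  | insert C Γ' Δo hyp ih =>
    intro b' hw
    rcases wkmt_fill_inv C hw with ⟨X', hX, rfl⟩ | ⟨C', rfl, hall⟩
    · rcases wkmt_comma_inv hX with ⟨Γ₂, h1, rfl⟩ | ⟨m', h2, rfl⟩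
      · obtain ⟨a', ha, hr⟩ := ih _ (wkmt_fill C h1)
        exact ⟨a', .insert C Γ₂ Δo ha, hr⟩
      · cases Δo with
        | none =>
          obtain ⟨_, Δ, rfl⟩ := wkmt_fm_inv h2
          exact ⟨_, .insert C Γ' (some Δ) hyp, .inl rfl⟩
        | some Δ₀ =>
          rcases wkmt_semi_inv h2 with ⟨w, h3, rfl⟩ | ⟨Δ₂, h3, rfl⟩
          · obtain ⟨_, Δ, rfl⟩ := wkmt_fm_inv h3
            refine ⟨_, .congr (.insert C Γ' (some (.semi Δ Δ₀)) hyp)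
              (bunchEq_fill C (.commaCongr (.refl _)
                (.symm (.semiAssoc (.fm .mtop) Δ Δ₀)))), .inl rfl⟩
          · exact ⟨_, .insert C Γ' (some Δ₂) hyp, .inl rfl⟩
    · obtain ⟨a', ha, hr⟩ := ih _ (hall Γ')
      exact ⟨a', .insert C' Γ' Δo ha, hr⟩
  | insertSemi C Γ' Γ'' Δo hyp ih =>
    intro b' hw
    rcases wkmt_fill_inv C hw with ⟨X', hX, rfl⟩ | ⟨C', rfl, hall⟩
    · rcases wkmt_semi_inv hX with ⟨y, h1, rfl⟩ | ⟨Γ₂, h1, rfl⟩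
      · rcases wkmt_comma_inv h1 with ⟨Γ₂, h2, rfl⟩ | ⟨m', h2, rfl⟩
        · obtain ⟨a', ha, hr⟩ := ih _ (wkmt_fill C (.semiL Γ'' h2))
          exact ⟨a', .insertSemi C Γ₂ Γ'' Δo ha, hr⟩
        · cases Δo with
          | none =>
            obtain ⟨_, Δ, rfl⟩ := wkmt_fm_inv h2
            exact ⟨_, .insertSemi C Γ' Γ'' (some Δ) hyp, .inl rfl⟩
          | some Δ₀ =>
            rcases wkmt_semi_inv h2 with ⟨w, h3, rfl⟩ | ⟨Δ₂, h3, rfl⟩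
            · obtain ⟨_, Δ, rfl⟩ := wkmt_fm_inv h3
              refine ⟨_, .congr (.insertSemi C Γ' Γ'' (some (.semi Δ Δ₀)) hyp)
                (bunchEq_fill C (.semiCongr (.commaCongr (.refl _)
                  (.symm (.semiAssoc (.fm .mtop) Δ Δ₀))) (.refl _))), .inl rfl⟩
            · exact ⟨_, .insertSemi C Γ' Γ'' (some Δ₂) hyp, .inl rfl⟩
      · obtain ⟨a', ha, hr⟩ := ih _ (wkmt_fill C (.semiR Γ' h1))
        exact ⟨a', .insertSemi C Γ' Γ₂ Δo ha, hr⟩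
    · obtain ⟨a', ha, hr⟩ := ih _ (hall _)
      exact ⟨a', .insertSemi C' Γ' Γ'' Δo ha, hr⟩
  | congr hyp heq ih =>
    intro b' hw
    obtain ⟨b₀, hw₀, he₀⟩ := (bunchEq_wkmt heq).1 b' hw
    obtain ⟨a', ha, hr⟩ := ih _ hw₀
    exact ⟨a', ha.congr he₀, hr⟩

def RemW (a a' : Bunch) : Prop := Rem a a' ∨ a' = a ∨ WkMT a a'

/-- Essences are stable under removal of a ⊤* comma component. -/
theorem essence_rem {a b : Bunch} (h : Essence a b) :
    ∀ b', Rem b b' → ∃ a', Essence a' b' ∧ RemW a a' := by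
  induction h with
  | ofEq h =>
    intro b' hr
    obtain ⟨a', hr', he⟩ := (bunchEq_rem h).1 b' hr
    exact ⟨a', .ofEq he, .inl hr'⟩
  | insert C Γ' Δo hyp ih =>
    intro b' hr
    rcases rem_fill_inv C hr with ⟨X', hX, rfl⟩ | ⟨C', rfl, hall⟩ | ⟨hx, _⟩
    · rcases rem_comma_inv hX with ⟨rfl, rfl⟩ | ⟨hfm, rfl⟩ | ⟨Γ₂, h1, rfl⟩ | ⟨m', h1, rfl⟩
      · -- Γ' = ⊤* removed; X' = mte Δo
        cases Δo with
        | none => exact ⟨a, hyp, .inr (.inl rfl)⟩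
        | some Δ =>
          obtain ⟨a', ha, hr⟩ := essence_wkmt hyp _ (wkmt_fill C (.here Δ))
          exact ⟨a', ha, .inr hr⟩
      · -- mte Δo = ⊤* removed
        cases Δo with
        | none => exact ⟨a, hyp, .inr (.inl rfl)⟩
        | some Δ₀ => simp [mte] at hfm
      · obtain ⟨a', ha, hw⟩ := ih _ (rem_fill C h1)
        exact ⟨a', .insert C Γ₂ Δo ha, hw⟩
      · cases Δo with
        | none => exact absurd h1 rem_fm_inv
        | some Δ₀ =>
          rcases rem_semi_inv h1 with ⟨w, h3, rfl⟩ | ⟨Δ₂, h3, rfl⟩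
          · exact absurd h3 rem_fm_inv
          · exact ⟨a, .insert C Γ' (some Δ₂) hyp, .inr (.inl rfl)⟩
    · obtain ⟨a', ha, hw⟩ := ih _ (hall Γ')
      exact ⟨a', .insert C' Γ' Δo ha, hw⟩
    · simp at hx
  | insertSemi C Γ' Γ'' Δo hyp ih =>
    intro b' hr
    rcases rem_fill_inv C hr with ⟨X', hX, rfl⟩ | ⟨C', rfl, hall⟩ | ⟨hx, _⟩
    · rcases rem_semi_inv hX with ⟨y, h1, rfl⟩ | ⟨Γ₂, h1, rfl⟩
      · rcases rem_comma_inv h1 with ⟨rfl, rfl⟩ | ⟨hfm, rfl⟩ | ⟨Γ₂, h2, rfl⟩ | ⟨m', h2, rfl⟩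
        · cases Δo with
          | none => exact ⟨a, hyp, .inr (.inl rfl)⟩
          | some Δ =>
            obtain ⟨a', ha, hr⟩ :=
              essence_wkmt hyp _ (wkmt_fill C (.semiL Γ'' (.here Δ)))
            exact ⟨a', ha, .inr hr⟩
        · cases Δo with
          | none => exact ⟨a, hyp, .inr (.inl rfl)⟩
          | some Δ₀ => simp [mte] at hfm
        · obtain ⟨a', ha, hw⟩ := ih _ (rem_fill C (.semiL Γ'' h2))
          exact ⟨a', .insertSemi C Γ₂ Γ'' Δo ha, hw⟩
        · cases Δo with
          | none => exact absurd h2 rem_fm_inv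
          | some Δ₀ =>
            rcases rem_semi_inv h2 with ⟨w, h3, rfl⟩ | ⟨Δ₂, h3, rfl⟩
            · exact absurd h3 rem_fm_inv
            · exact ⟨a, .insertSemi C Γ' Γ'' (some Δ₂) hyp, .inr (.inl rfl)⟩
      · obtain ⟨a', ha, hw⟩ := ih _ (rem_fill C (.semiR Γ' h1))
        exact ⟨a', .insertSemi C Γ' Γ₂ Δo ha, hw⟩
    · obtain ⟨a', ha, hw⟩ := ih _ (hall _)
      exact ⟨a', .insertSemi C' Γ' Γ'' Δo ha, hw⟩
    · simp at hx
  | congr hyp heq ih =>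
    intro b' hr
    obtain ⟨b₀, hr₀, he₀⟩ := (bunchEq_rem heq).1 b' hr
    obtain ⟨a', ha, hw⟩ := ih _ hr₀
    exact ⟨a', ha.congr he₀, hw⟩

theorem principal_remw {Γt : Option Bunch} {F : BI} {a' : Bunch}
    (h : RemW (osemi Γt (.fm F)) a') :
    ∃ Γt', BunchEq (osemi Γt' (.fm F)) a' := by
  cases Γt with
  | none =>
    rcases h with h | rfl | h
    · exact absurd h rem_fm_inv
    · exact ⟨none, .refl _⟩
    · obtain ⟨rfl, Δ, rfl⟩ := wkmt_fm_inv h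
      exact ⟨some Δ, .semiComm Δ (.fm .mtop)⟩
  | some G =>
    rcases h with h | rfl | h
    · rcases rem_semi_inv h with ⟨G', h1, rfl⟩ | ⟨y, h1, rfl⟩
      · exact ⟨some G', .refl _⟩
      · exact absurd h1 rem_fm_inv
    · exact ⟨some G, .refl _⟩
    · rcases wkmt_semi_inv h with ⟨G', h1, rfl⟩ | ⟨y, h1, rfl⟩
      · exact ⟨some G', .refl _⟩
      · obtain ⟨rfl, Δ, rfl⟩ := wkmt_fm_inv h1
        exact ⟨some (.semi G Δ),
          (BunchEq.semiAssoc G Δ (.fm .mtop)).trans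
            (.semiCongr (.refl G) (.semiComm Δ (.fm .mtop)))⟩

theorem essence_rem_principal {Γt : Option Bunch} {F : BI} {b b' : Bunch}
    (h : Essence (osemi Γt (.fm F)) b) (hr : Rem b b') :
    ∃ Γt', Essence (osemi Γt' (.fm F)) b' := by
  obtain ⟨a', ha, hq⟩ := essence_rem h b' hr
  obtain ⟨Γt', he⟩ := principal_remw hq
  exact ⟨Γt', ha.preEq he⟩

theorem wle_rem {R Γ : Bunch} (h : Wle R Γ) :
    ∀ Δf, Rem Γ Δf → ∃ R', Wle R' Δf ∧ (Rem R R' ∨ BunchEq R R') := by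
  induction h with
  | ofEq h =>
    intro Δf hr
    obtain ⟨R', hr', he⟩ := (bunchEq_rem h).1 Δf hr
    exact ⟨R', .ofEq he, .inl hr'⟩
  | weak C Δ Γ' =>
    intro Δf hr
    rcases rem_fill_inv C hr with ⟨X', hX, rfl⟩ | ⟨C', rfl, hall⟩ | ⟨hx, _⟩
    · rcases rem_semi_inv hX with ⟨Δ₂, h1, rfl⟩ | ⟨Γ₂, h2, rfl⟩
      · exact ⟨C.fill Δ₂, .weak C Δ₂ Γ', .inl (rem_fill C h1)⟩
      · exact ⟨C.fill Δ, .weak C Δ Γ₂, .inr (.refl _)⟩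
    · exact ⟨C'.fill Δ, .weak C' Δ Γ', .inl (hall Δ)⟩
    · simp at hx
  | trans h1 h2 ih1 ih2 =>
    intro Δf hr
    obtain ⟨b', hw, hb⟩ := ih2 Δf hr
    rcases hb with hb | hb
    · obtain ⟨a', hw', ha⟩ := ih1 b' hb
      exact ⟨a', hw'.trans hw, ha⟩
    · exact ⟨_, (h1.trans ((Wle.ofEq hb).trans hw)), .inr (.refl _)⟩

theorem cand_fm {A B : Bunch} (h : Candidate (.fm .mtop) A B) :
    A = .fm .mtop ∧ B = .fm .mtop := by
  rcases h with ⟨hB, hw⟩ | hw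
  · exact ⟨wle_fm hw _ rfl, hB⟩
  · exact absurd (wle_fm hw _ rfl) (by simp)

theorem cand_rem {Γ A B Γ₂ : Bunch} (h : Candidate Γ A B) (hr : Rem Γ Γ₂) :
    ∃ A' B', (Candidate Γ₂ A' B' ∨ Candidate Γ₂ B' A') ∧
      (Rem A A' ∨ BunchEq A A') ∧ (Rem B B' ∨ BunchEq B B') := by
  rcases h with ⟨rfl, hw⟩ | hw
  · obtain ⟨A', hw', hA⟩ := wle_rem hw Γ₂ hr
    exact ⟨A', _, .inl (.inl ⟨rfl, hw'⟩), hA, .inr (.refl _)⟩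
  · obtain ⟨Q, hwQ, hQ⟩ := wle_rem hw Γ₂ hr
    rcases hQ with hQ | hQ
    · rcases rem_comma_inv hQ with ⟨rfl, rfl⟩ | ⟨rfl, rfl⟩ | ⟨A', h', rfl⟩ | ⟨B', h', rfl⟩
      · exact ⟨_, _, .inr (.inl ⟨rfl, hwQ⟩), .inr (.refl _), .inr (.refl _)⟩
      · exact ⟨_, _, .inl (.inl ⟨rfl, hwQ⟩), .inr (.refl _), .inr (.refl _)⟩
      · exact ⟨A', B, .inl (.inr hwQ), .inl h', .inr (.refl _)⟩
      · exact ⟨A, B', .inl (.inr hwQ), .inr (.refl _), .inl h'⟩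
    · exact ⟨A, B, .inl (.inr ((Wle.ofEq hQ).trans hwQ)), .inr (.refl _), .inr (.refl _)⟩

theorem cand_rem' {Γ A B Γ₂ : Bunch}
    (h : Candidate Γ A B ∨ Candidate Γ B A) (hr : Rem Γ Γ₂) :
    ∃ A' B', (Candidate Γ₂ A' B' ∨ Candidate Γ₂ B' A') ∧
      (Rem A A' ∨ BunchEq A A') ∧ (Rem B B' ∨ BunchEq B B') := by
  rcases h with h | h
  · exact cand_rem h hr
  · obtain ⟨B', A', hc, hB, hA⟩ := cand_rem h hr
    exact ⟨A', B', hc.symm, hA, hB⟩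
theorem lbiz_remq {k : Nat} {A A' : Bunch} {F : BI}
    (ih : ∀ Δ', Rem A Δ' → ∃ l ≤ k, LBIZc Δ' F l)
    (hd : LBIZc A F k) (h : Rem A A' ∨ BunchEq A A') :
    ∃ l ≤ k, LBIZc A' F l := by
  rcases h with h | h
  · exact ih A' h
  · exact ⟨k, le_refl k, .equiv h hd⟩

theorem lbiz_rem_aux {Γ : Bunch} {H : BI} {k : Nat} (h : LBIZc Γ H k) :
    (∀ j, j < k → ∀ Γ₀ H₀, LBIZc Γ₀ H₀ j → ∀ Δ', Rem Γ₀ Δ' →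
      ∃ l ≤ j, LBIZc Δ' H₀ l) →
    ∀ Δ', Rem Γ Δ' → ∃ l ≤ k, LBIZc Δ' H l := by
  induction h with
  | id Γt p hE =>
    intro _ Δ' hr
    obtain ⟨Γt', hE'⟩ := essence_rem_principal hE hr
    exact ⟨1, le_refl 1, .id Γt' p hE'⟩
  | botL C H =>
    intro _ Δ' hr
    rcases rem_fill_inv C hr with ⟨X', hX, rfl⟩ | ⟨C', rfl, _⟩ | ⟨hx, _⟩
    · exact absurd hX rem_fm_inv
    · exact ⟨1, le_refl 1, .botL C' H⟩
    · simp at hx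
  | topR Γ =>
    intro _ Δ' _
    exact ⟨1, le_refl 1, .topR Δ'⟩
  | mtopR Γt hE =>
    intro _ Δ' hr
    obtain ⟨Γt', hE'⟩ := essence_rem_principal hE hr
    exact ⟨1, le_refl 1, .mtopR Γt' hE'⟩
  | @conjL C F G H n h1 _ =>
    intro hk Δ' hr
    rcases rem_fill_inv C hr with ⟨X', hX, rfl⟩ | ⟨C', rfl, hall⟩ | ⟨hx, _⟩
    · exact absurd hX rem_fm_inv
    · obtain ⟨l, hl, hd⟩ := hk n (by omega) _ _ h1 _ (hall (.semi (.fm F) (.fm G)))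
      exact ⟨l + 1, by omega, .conjL hd⟩
    · simp at hx
  | @conjR Γ F G n m h1 h2 _ _ =>
    intro hk Δ' hr
    obtain ⟨l1, hl1, hd1⟩ := hk n (by omega) _ _ h1 Δ' hr
    obtain ⟨l2, hl2, hd2⟩ := hk m (by omega) _ _ h2 Δ' hr
    exact ⟨max l1 l2 + 1, by omega, .conjR hd1 hd2⟩
  | @disjL C F G H n m h1 h2 _ _ =>
    intro hk Δ' hr
    rcases rem_fill_inv C hr with ⟨X', hX, rfl⟩ | ⟨C', rfl, hall⟩ | ⟨hx, _⟩
    · exact absurd hX rem_fm_inv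
    · obtain ⟨l1, hl1, hd1⟩ := hk n (by omega) _ _ h1 _ (hall (.fm F))
      obtain ⟨l2, hl2, hd2⟩ := hk m (by omega) _ _ h2 _ (hall (.fm G))
      exact ⟨max l1 l2 + 1, by omega, .disjL hd1 hd2⟩
    · simp at hx
  | @disjR₁ Γ F G n h1 _ =>
    intro hk Δ' hr
    obtain ⟨l, hl, hd⟩ := hk n (by omega) _ _ h1 Δ' hr
    exact ⟨l + 1, by omega, .disjR₁ hd⟩
  | @disjR₂ Γ F G n h1 _ =>
    intro hk Δ' hr
    obtain ⟨l, hl, hd⟩ := hk n (by omega) _ _ h1 Δ' hr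
    exact ⟨l + 1, by omega, .disjR₂ hd⟩
  | @impL Γt F G Δ C H n m hE h1 h2 _ _ =>
    intro hk Δf hr
    rcases rem_fill_inv C hr with ⟨Δ₂, hX, rfl⟩ | ⟨C', rfl, hall⟩ | ⟨hx, _⟩
    · obtain ⟨Γt', hE'⟩ := essence_rem_principal hE hX
      obtain ⟨l1, hl1, hd1⟩ := hk n (by omega) _ _ h1 _ hX
      obtain ⟨l2, hl2, hd2⟩ := hk m (by omega) _ _ h2 _
        (rem_fill C (Rem.semiR _ hX))
      exact ⟨max l1 l2 + 1, by omega, .impL Γt' hE' hd1 hd2⟩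
    · obtain ⟨l2, hl2, hd2⟩ := hk m (by omega) _ _ h2 _ (hall (.semi (.fm G) Δ))
      exact ⟨max n l2 + 1, by omega, .impL Γt hE h1 hd2⟩
    · subst hx
      have := essence_fm hE _ rfl
      cases Γt <;> simp [osemi] at this
  | @impR Γ F G n h1 _ =>
    intro hk Δ' hr
    obtain ⟨l, hl, hd⟩ := hk n (by omega) _ _ h1 _ (Rem.semiL _ hr)
    exact ⟨l + 1, by omega, .impR hd⟩
  | @starL C F G H n h1 _ =>
    intro hk Δ' hr
    rcases rem_fill_inv C hr with ⟨X', hX, rfl⟩ | ⟨C', rfl, hall⟩ | ⟨hx, _⟩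
    · exact absurd hX rem_fm_inv
    · obtain ⟨l, hl, hd⟩ := hk n (by omega) _ _ h1 _ (hall (.comma (.fm F) (.fm G)))
      exact ⟨l + 1, by omega, .starL hd⟩
    · simp at hx
  | @starR Γ' R₁ R₂ F G n m hor h1 h2 _ _ =>
    intro hk Δf hr
    obtain ⟨A', B', hc, hA, hB⟩ := cand_rem' hor hr
    obtain ⟨l1, hl1, hd1⟩ := lbiz_remq (fun Δ' hh => hk n (by omega) _ _ h1 Δ' hh) h1 hA
    obtain ⟨l2, hl2, hd2⟩ := lbiz_remq (fun Δ' hh => hk m (by omega) _ _ h2 Δ' hh) h2 hB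
    exact ⟨max l1 l2 + 1, by omega, .starR hc hd1 hd2⟩
  | @wandL Γ'o Rej Rei Γt F G Δ C H n m hE hside h1 h2 _ _ =>
    intro hk Δf hr
    rcases hside with ⟨rfl, rfl, rfl⟩ | ⟨Γ', Rj, rfl, rfl, hc⟩
    · -- Γ'o = none, Rei = ⊤*, Rej = none
      rcases rem_fill_inv C hr with ⟨Δ₂, hX, rfl⟩ | ⟨C', rfl, hall⟩ | ⟨hx, _⟩
      · obtain ⟨Γt', hE'⟩ := essence_rem_principal hE hX
        obtain ⟨l2, hl2, hd2⟩ := hk m (by omega) _ _ h2 _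
          (rem_fill C (Rem.semiR _ hX))
        exact ⟨max n l2 + 1, by omega,
          .wandL none none _ Γt' hE' (.inl ⟨rfl, rfl, rfl⟩) h1 hd2⟩
      · obtain ⟨l2, hl2, hd2⟩ := hk m (by omega) _ _ h2 _
          (hall (.semi (.fm G) Δ))
        exact ⟨max n l2 + 1, by omega,
          .wandL none none _ Γt hE (.inl ⟨rfl, rfl, rfl⟩) h1 hd2⟩
      · subst hx
        have := essence_fm hE _ rfl
        cases Γt <;> simp [osemi] at this
    · -- Γ'o = some Γ', Rej = some Rj
      rcases rem_fill_inv C hr with ⟨Xf, hX, rfl⟩ | ⟨C', rfl, hall⟩ | ⟨hx, _⟩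
      · rcases rem_comma_inv hX with ⟨rfl, rfl⟩ | ⟨hfm, rfl⟩ | ⟨Γ₂, h', rfl⟩ | ⟨Δ₂, h', rfl⟩
        · -- Γ' = ⊤* removed
          have hboth : Rei = .fm .mtop ∧ Rj = .fm .mtop := by
            rcases hc with hc | hc
            · exact cand_fm hc
            · exact (cand_fm hc).symm
          obtain ⟨rfl, rfl⟩ := hboth
          obtain ⟨l1, hl1, hd1⟩ := hk m (by omega) _ _ h2 _
            (rem_fill C (Rem.semiL _ (Rem.hereL (.fm G))))
          obtain ⟨l2, hl2, hd2⟩ := hk l1 (by omega) _ _ hd1 _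
            (rem_fill C (Rem.semiR _ (Rem.hereL _)))
          exact ⟨max n l2 + 1, by omega,
            .wandL none none (.fm .mtop) Γt hE (.inl ⟨rfl, rfl, rfl⟩) h1 hd2⟩
        · -- Δ = ⊤* removed: impossible
          subst hfm
          have := essence_fm hE _ rfl
          cases Γt <;> simp [osemi] at this
        · -- removal inside Γ'
          obtain ⟨A', B', hc', hA, hB⟩ := cand_rem' hc h'
          obtain ⟨l1, hl1, hd1⟩ :=
            lbiz_remq (fun Δ' hh => hk n (by omega) _ _ h1 Δ' hh) h1 hA
          have step1 : ∃ l ≤ m,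
              LBIZc (C.fill (.semi (.comma B' (.fm G)) (.comma Γ' Δ))) H l := by
            rcases hB with hB | hB
            · exact hk m (by omega) _ _ h2 _
                (rem_fill C (Rem.semiL _ (Rem.commaL _ hB)))
            · exact ⟨m, le_refl m, .equiv
                (bunchEq_fill C (.semiCongr (.commaCongr hB (.refl _)) (.refl _))) h2⟩
          obtain ⟨l2a, hl2a, hd2a⟩ := step1
          obtain ⟨l2, hl2, hd2⟩ := hk l2a (by omega) _ _ hd2a _
            (rem_fill C (Rem.semiR _ (Rem.commaL _ h')))
          exact ⟨max l1 l2 + 1, by omega,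
            .wandL (some Γ₂) (some B') A' Γt hE (.inr ⟨Γ₂, B', rfl, rfl, hc'⟩) hd1 hd2⟩
        · -- removal inside Δ
          obtain ⟨Γt', hE'⟩ := essence_rem_principal hE h'
          obtain ⟨l2, hl2, hd2⟩ := hk m (by omega) _ _ h2 _
            (rem_fill C (Rem.semiR _ (Rem.commaR _ h')))
          exact ⟨max n l2 + 1, by omega,
            .wandL (some Γ') (some Rj) Rei Γt' hE' (.inr ⟨Γ', Rj, rfl, rfl, hc⟩) h1 hd2⟩
      · obtain ⟨l2, hl2, hd2⟩ := hk m (by omega) _ _ h2 _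
          (hall (.semi (.comma Rj (.fm G)) (.comma Γ' Δ)))
        exact ⟨max n l2 + 1, by omega,
          .wandL (some Γ') (some Rj) Rei Γt hE (.inr ⟨Γ', Rj, rfl, rfl, hc⟩) h1 hd2⟩
      · simp [ocomma] at hx
  | @wandR Γ F G n h1 _ =>
    intro hk Δ' hr
    obtain ⟨l, hl, hd⟩ := hk n (by omega) _ _ h1 _ (Rem.commaL _ hr)
    exact ⟨l + 1, by omega, .wandR hd⟩
  | @equiv Γ Γ'' H n he h1 ih =>
    intro hk Δf hr
    obtain ⟨Δ₀, hr₀, he₀⟩ := (bunchEq_rem he).1 Δf hr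
    obtain ⟨l, hl, hd⟩ := ih hk Δ₀ hr₀
    exact ⟨l, hl, .equiv he₀ hd⟩
  | cutRule hcut _ _ _ _ =>
    simp at hcut

theorem lbiz_rem : ∀ (k : Nat) (Γ : Bunch) (H : BI), LBIZc Γ H k →
    ∀ Δ', Rem Γ Δ' → ∃ l ≤ k, LBIZc Δ' H l := by
  intro k
  induction k using Nat.strong_induction_on with
  | _ k ih =>
    intro Γ H h Δ' hr
    exact lbiz_rem_aux h (fun j hj => ih j hj) Δ' hr

/-- the multiplicative unit is depth-preserving invertible in LBIZ. -/
theorem lbiz_mtop_invertible (C : Ctx) (Γ₁ : Bunch) (H : BI) (k : Nat)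
    (h : LBIZc (C.fill (.comma Γ₁ (.fm .mtop))) H k) :
    ∃ l ≤ k, LBIZc (C.fill Γ₁) H l :=
  lbiz_rem k _ H h (C.fill Γ₁) (rem_fill C (Rem.hereR Γ₁))
end

section
/- The right additive implication rule is depth-preserving invertible in LBIZ: if Γ ⊢ F ⊃ G is derivable in LBIZ with derivation depth at most k, then Γ; F ⊢ G is derivable in LBIZ with derivation depth at most k. Similarly, if Γ ⊢ F −∗ G is derivable with depth at most k, then Γ, F ⊢ G is derivable with depth at most k. -/
private lemma lbiz_inv_key {Γ : Bunch} {H : BI} {k : Nat} (h : LBIZc Γ H k) :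
    (∀ F G, H = .imp F G → ∃ l ≤ k, LBIZc (.semi Γ (.fm F)) G l) ∧
    (∀ F G, H = .wand F G → ∃ l ≤ k, LBIZc (.comma Γ (.fm F)) G l) := by
  induction h with
  | id Γt p hE =>
      exact ⟨fun F G hFG => by simp at hFG, fun F G hFG => by simp at hFG⟩
  | botL C H =>
      refine ⟨fun F G hFG => ?_, fun F G hFG => ?_⟩
      · exact ⟨1, le_refl _, LBIZ.botL (C.semiL (.fm F)) G⟩
      · exact ⟨1, le_refl _, LBIZ.botL (C.commaL (.fm F)) G⟩
  | topR Γ =>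
      exact ⟨fun F G hFG => by simp at hFG, fun F G hFG => by simp at hFG⟩
  | mtopR Γt hE =>
      exact ⟨fun F G hFG => by simp at hFG, fun F G hFG => by simp at hFG⟩
  | conjL h ih =>
      refine ⟨fun F G hFG => ?_, fun F G hFG => ?_⟩
      · obtain ⟨l, hl, hd⟩ := ih.1 F G hFG
        exact ⟨l + 1, Nat.succ_le_succ hl, LBIZ.conjL (C := Ctx.semiL _ (.fm F)) hd⟩
      · obtain ⟨l, hl, hd⟩ := ih.2 F G hFG
        exact ⟨l + 1, Nat.succ_le_succ hl, LBIZ.conjL (C := Ctx.commaL _ (.fm F)) hd⟩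
  | conjR h1 h2 ih1 ih2 =>
      exact ⟨fun F G hFG => by simp at hFG, fun F G hFG => by simp at hFG⟩
  | disjL h1 h2 ih1 ih2 =>
      refine ⟨fun F G hFG => ?_, fun F G hFG => ?_⟩
      · obtain ⟨l1, hl1, hd1⟩ := ih1.1 F G hFG
        obtain ⟨l2, hl2, hd2⟩ := ih2.1 F G hFG
        exact ⟨max l1 l2 + 1, by omega,
          LBIZ.disjL (C := Ctx.semiL _ (.fm F)) hd1 hd2⟩
      · obtain ⟨l1, hl1, hd1⟩ := ih1.2 F G hFG
        obtain ⟨l2, hl2, hd2⟩ := ih2.2 F G hFG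
        exact ⟨max l1 l2 + 1, by omega,
          LBIZ.disjL (C := Ctx.commaL _ (.fm F)) hd1 hd2⟩
  | disjR₁ h ih =>
      exact ⟨fun F G hFG => by simp at hFG, fun F G hFG => by simp at hFG⟩
  | disjR₂ h ih =>
      exact ⟨fun F G hFG => by simp at hFG, fun F G hFG => by simp at hFG⟩
  | impL Γt hE h1 h2 ih1 ih2 =>
      refine ⟨fun F G hFG => ?_, fun F G hFG => ?_⟩
      · obtain ⟨l, hl, hd⟩ := ih2.1 F G hFG
        exact ⟨max _ l + 1, by omega,
          LBIZ.impL (C := Ctx.semiL _ (.fm F)) Γt hE h1 hd⟩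
      · obtain ⟨l, hl, hd⟩ := ih2.2 F G hFG
        exact ⟨max _ l + 1, by omega,
          LBIZ.impL (C := Ctx.commaL _ (.fm F)) Γt hE h1 hd⟩
  | impR h ih =>
      refine ⟨fun F G hFG => ?_, fun F G hFG => by simp at hFG⟩
      injection hFG with hF hG; subst hF; subst hG
      exact ⟨_, Nat.le_succ _, h⟩
  | starL h ih =>
      refine ⟨fun F G hFG => ?_, fun F G hFG => ?_⟩
      · obtain ⟨l, hl, hd⟩ := ih.1 F G hFG
        exact ⟨l + 1, Nat.succ_le_succ hl, LBIZ.starL (C := Ctx.semiL _ (.fm F)) hd⟩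
      · obtain ⟨l, hl, hd⟩ := ih.2 F G hFG
        exact ⟨l + 1, Nat.succ_le_succ hl, LBIZ.starL (C := Ctx.commaL _ (.fm F)) hd⟩
  | starR hc h1 h2 ih1 ih2 =>
      exact ⟨fun F G hFG => by simp at hFG, fun F G hFG => by simp at hFG⟩
  | wandL Γ'o Rej Rei Γt hE hside h1 h2 ih1 ih2 =>
      refine ⟨fun F G hFG => ?_, fun F G hFG => ?_⟩
      · obtain ⟨l, hl, hd⟩ := ih2.1 F G hFG
        exact ⟨max _ l + 1, by omega,
          LBIZ.wandL (C := Ctx.semiL _ (.fm F)) Γ'o Rej Rei Γt hE hside h1 hd⟩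
      · obtain ⟨l, hl, hd⟩ := ih2.2 F G hFG
        exact ⟨max _ l + 1, by omega,
          LBIZ.wandL (C := Ctx.commaL _ (.fm F)) Γ'o Rej Rei Γt hE hside h1 hd⟩
  | wandR h ih =>
      refine ⟨fun F G hFG => by simp at hFG, fun F G hFG => ?_⟩
      injection hFG with hF hG; subst hF; subst hG
      exact ⟨_, Nat.le_succ _, h⟩
  | equiv heq h ih =>
      refine ⟨fun F G hFG => ?_, fun F G hFG => ?_⟩
      · obtain ⟨l, hl, hd⟩ := ih.1 F G hFG
        exact ⟨l, hl, LBIZ.equiv (BunchEq.semiCongr heq (.refl _)) hd⟩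
      · obtain ⟨l, hl, hd⟩ := ih.2 F G hFG
        exact ⟨l, hl, LBIZ.equiv (BunchEq.commaCongr heq (.refl _)) hd⟩
  | cutRule hcut =>
      exact absurd hcut (by simp)

/-- ⊃R and −∗R are depth-preserving invertible in LBIZ. -/
theorem lbiz_impR_wandR_invertible :
    (∀ (Γ : Bunch) (F G : BI) (k : Nat), LBIZc Γ (.imp F G) k →
      ∃ l ≤ k, LBIZc (.semi Γ (.fm F)) G l) ∧
    (∀ (Γ : Bunch) (F G : BI) (k : Nat), LBIZc Γ (.wand F G) k →
      ∃ l ≤ k, LBIZc (.comma Γ (.fm F)) G l) :=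
  ⟨fun _ F G _ h => (lbiz_inv_key h).1 F G rfl,
   fun _ F G _ h => (lbiz_inv_key h).2 F G rfl⟩
end
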